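/- arXiv:1112.3853 — 2 statements merged into one kernel-verified Lean document; each statement's English description precedes it below -/
import Mathlib

section
/- Let H_0, H_1, H_2, H_3, H_A be finite-dimensional complex Hilbert spaces, let 𝒞 : L(H_0) → L(H_1 ⊗ H_A) and 𝒟 : L(H_2 ⊗ H_A) → L(H_3) be linear maps with Choi operators C (on H_1 ⊗ H_A ⊗ H_0) and D (on H_3 ⊗ H_2 ⊗ H_A), and let ℰ : L(H_0 ⊗ H_2) → L(H_1 ⊗ H_3) be the composite map ℰ(ρ) := (id_{L(H_1)} ⊗ 𝒟)((𝒞 ⊗ id_{L(H_2)})(ρ)), with tensor factors reordered appropriately. Then the Choi operator of ℰ equals the link product C * D := Tr_{H_A}[(C ⊗ I_{H_2 ⊗ H_3})(I_{H_0 ⊗ H_1} ⊗ D^{T_A})], where T_A denotes partial transposition on H_A and tensor factors are reordered appropriately. -/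
open ComplexOrder

noncomputable section

/-- Choi operator `∑ i j, F(E i j) ⊗ E i j` of a map between matrix algebras,
where `E i j` are the matrix units. -/
def choiFun {I O : Type} [Fintype I] [DecidableEq I]
    (F : Matrix I I ℂ → Matrix O O ℂ) : Matrix (O × I) (O × I) ℂ :=
  ∑ i : I, ∑ j : I,
    Matrix.kroneckerMap (· * ·) (F (Matrix.single i j 1)) (Matrix.single i j 1)

/-- The extension `F ⊗ id` of a map on matrices, acting on a composite system. -/
def tensorId {I O K : Type} (F : Matrix I I ℂ → Matrix O O ℂ)
    (M : Matrix (I × K) (I × K) ℂ) : Matrix (O × K) (O × K) ℂ :=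
  fun p q => F (fun i j => M (i, p.2) (j, q.2)) p.1 q.1

/-- Complete positivity of a linear map between matrix algebras: for every
`k ∈ ℕ`, `F ⊗ id_{Matrix (Fin k) (Fin k) ℂ}` preserves positive semidefiniteness. -/
def IsCPMap {I O : Type} [Fintype I] [Fintype O]
    (F : Matrix I I ℂ →ₗ[ℂ] Matrix O O ℂ) : Prop :=
  ∀ (k : ℕ) (M : Matrix (I × Fin k) (I × Fin k) ℂ),
    M.PosSemidef → (tensorId (⇑F) M).PosSemidef

/-- Quantum channel: completely positive and trace preserving. -/
def IsCPTPMap {I O : Type} [Fintype I] [Fintype O]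
    (F : Matrix I I ℂ →ₗ[ℂ] Matrix O O ℂ) : Prop :=
  IsCPMap F ∧ ∀ M : Matrix I I ℂ, (F M).trace = M.trace

/-- Partial trace over the first tensor factor. -/
def ptr1 {O I : Type} [Fintype O] (C : Matrix (O × I) (O × I) ℂ) : Matrix I I ℂ :=
  fun i j => ∑ p : O, C (p, i) (p, j)

/-- Partial trace over the second tensor factor. -/
def ptr2 {O I : Type} [Fintype I] (C : Matrix (O × I) (O × I) ℂ) : Matrix O O ℂ :=
  fun p q => ∑ j : I, C (p, j) (q, j)

/-- `dyadM K = |K⟩⟩⟨⟨K|`, the rank-one operator associated with the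
vectorization `|K⟩⟩ = ∑ i j, K i j |i⟩⊗|j⟩` of the matrix `K`. -/
def dyadM {m n : Type} (K : Matrix m n ℂ) : Matrix (m × n) (m × n) ℂ :=
  fun p q => K p.1 p.2 * star (K q.1 q.2)

/-- The composite map `ℰ = (id_{L(H1)} ⊗ 𝒟) ∘ (𝒞 ⊗ id_{L(H2)})` of
`𝒞 : L(H0) → L(H1 ⊗ HA)` and `𝒟 : L(H2 ⊗ HA) → L(H3)` (with the tensor
factors reordered appropriately). -/
def compMap {n0 n1 n2 n3 nA : ℕ}
    (𝒞 : Matrix (Fin n0) (Fin n0) ℂ →ₗ[ℂ] Matrix (Fin n1 × Fin nA) (Fin n1 × Fin nA) ℂ)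
    (𝒟 : Matrix (Fin n2 × Fin nA) (Fin n2 × Fin nA) ℂ →ₗ[ℂ] Matrix (Fin n3) (Fin n3) ℂ)
    (ρ : Matrix (Fin n0 × Fin n2) (Fin n0 × Fin n2) ℂ) :
    Matrix (Fin n1 × Fin n3) (Fin n1 × Fin n3) ℂ :=
  fun p q =>
    𝒟 (fun ca c'a' =>
        𝒞 (fun i j => ρ (i, ca.1) (j, c'a'.1)) (p.1, ca.2) (q.1, c'a'.2)) p.2 q.2

lemma choiFun_apply {I O : Type} [Fintype I] [DecidableEq I]
    (F : Matrix I I ℂ → Matrix O O ℂ) (x y : O) (i j : I) :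
    choiFun F (x, i) (y, j) = F (Matrix.single i j 1) x y := by
  unfold choiFun
  simp [Matrix.sum_apply, Matrix.single, Matrix.of_apply, mul_ite,
    ite_and, Finset.sum_ite_eq]

/-- the Choi operator of the composite
`ℰ = (id ⊗ 𝒟) ∘ (𝒞 ⊗ id)` is the link product
`C * D = Tr_{H_A}[(C ⊗ I)(I ⊗ D^{T_A})]` of the Choi operators of `𝒞` and `𝒟`
(written entrywise, with tensor factors reordered appropriately). -/
theorem stmt3 (n0 n1 n2 n3 nA : ℕ)
    (𝒞 : Matrix (Fin n0) (Fin n0) ℂ →ₗ[ℂ] Matrix (Fin n1 × Fin nA) (Fin n1 × Fin nA) ℂ)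
    (𝒟 : Matrix (Fin n2 × Fin nA) (Fin n2 × Fin nA) ℂ →ₗ[ℂ] Matrix (Fin n3) (Fin n3) ℂ) :
    ∀ (p : Fin n1) (r : Fin n3) (i : Fin n0) (c : Fin n2)
      (p' : Fin n1) (r' : Fin n3) (i' : Fin n0) (c' : Fin n2),
      choiFun (compMap 𝒞 𝒟) ((p, r), (i, c)) ((p', r'), (i', c')) =
        ∑ a : Fin nA, ∑ a' : Fin nA,
          choiFun ⇑𝒞 ((p, a), i) ((p', a'), i') *
          choiFun ⇑𝒟 (r, (c, a)) (r', (c', a')) := by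
  intro p r i c p' r' i' c'
  rw [choiFun_apply]
  simp only [choiFun_apply]
  show 𝒟 (fun ca c'a' =>
      𝒞 (fun i0 j0 => Matrix.single (i,c) (i',c') 1 (i0, ca.1) (j0, c'a'.1))
        (p, ca.2) (p', c'a'.2)) r r' = _
  have hM : (fun ca c'a' =>
      𝒞 (fun i0 j0 => Matrix.single (i,c) (i',c') 1 (i0, ca.1) (j0, c'a'.1))
        (p, ca.2) (p', c'a'.2)) =
      ∑ a : Fin nA, ∑ a' : Fin nA,
        𝒞 (Matrix.single i i' 1) (p, a) (p', a') •
          Matrix.single (c, a) (c', a') (1 : ℂ) := by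
    funext ca c'a'
    obtain ⟨c0, a0⟩ := ca
    obtain ⟨c0', a0'⟩ := c'a'
    by_cases h : c = c0 ∧ c' = c0'
    · have heq : (fun i0 j0 => Matrix.single (i,c) (i',c') (1:ℂ) (i0, c0) (j0, c0')) =
          Matrix.single i i' 1 := by
        funext i0 j0
        simp [Matrix.single, Prod.ext_iff, h.1, h.2]
      rw [heq]
      simp [Matrix.sum_apply, Matrix.single, Prod.ext_iff, ite_and,
        Finset.sum_ite_eq, Matrix.smul_apply, h.1, h.2]
    · have hz : (fun i0 j0 => Matrix.single (i,c) (i',c') (1:ℂ) (i0, c0) (j0, c0')) =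
          (0 : Matrix (Fin n0) (Fin n0) ℂ) := by
        funext i0 j0
        simp only [Matrix.single, Matrix.of_apply, Prod.mk.injEq, Matrix.zero_apply]
        rw [if_neg]
        rintro ⟨⟨-, h1⟩, -, h2⟩
        exact h ⟨h1, h2⟩
      rw [hz, map_zero]
      simp only [Matrix.sum_apply, Matrix.smul_apply, Matrix.single, Matrix.of_apply,
        Prod.mk.injEq, Matrix.zero_apply]
      rw [Finset.sum_eq_zero]
      intro a _
      rw [Finset.sum_eq_zero]
      intro a' _
      rw [if_neg, smul_zero]
      rintro ⟨⟨h1, -⟩, h2, -⟩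
      exact h ⟨h1, h2⟩
  rw [hM]
  simp only [map_sum, map_smul, Matrix.sum_apply, Matrix.smul_apply, smul_eq_mul]


end
end

section
/- Let C be a positive semidefinite operator on ℂ^m ⊗ ℂ^n and d ∈ ℕ. If C = Σ_{i ∈ I} Q_i for a finite family of positive semidefinite operators Q_i on ℂ^m ⊗ ℂ^n with rank(Tr_{ℂ^m}[Q_i]) ≤ d for every i, then there exists a finite family of vectors ψ_j ∈ ℂ^m ⊗ ℂ^n such that C = Σ_j |ψ_j⟩⟨ψ_j| and rank(Tr_{ℂ^m}[|ψ_j⟩⟨ψ_j|]) ≤ d for every j (equivalently, each ψ_j has Schmidt rank at most d). -/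
open ComplexOrder Matrix

noncomputable section

/- Auxiliary lemmas -/

lemma vecMulVec_star_posSemidef {ι : Type} [Fintype ι] (v : ι → ℂ) :
    (Matrix.vecMulVec v (star v)).PosSemidef := by
  have h : Matrix.vecMulVec v (star v)
      = (Matrix.replicateRow Unit (star v))ᴴ * Matrix.replicateRow Unit (star v) := by
    rw [Matrix.conjTranspose_replicateRow, star_star]
    exact Matrix.vecMulVec_eq Unit v (star v)
  rw [h]
  exact Matrix.posSemidef_conjTranspose_mul_self _

lemma psd_sum {ι κ : Type} [Fintype ι] [DecidableEq ι] (t : Finset κ)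
    (f : κ → Matrix ι ι ℂ) (hf : ∀ k ∈ t, (f k).PosSemidef) :
    (∑ k ∈ t, f k).PosSemidef := by
  classical
  induction t using Finset.induction_on with
  | empty => simpa using Matrix.PosSemidef.zero
  | @insert a s hx ih =>
    rw [Finset.sum_insert hx]
    exact (hf _ (Finset.mem_insert_self _ _)).add
      (ih fun k hk => hf k (Finset.mem_insert_of_mem hk))

lemma ptr1_posSemidef {O I : Type} [Fintype O] [Fintype I] [DecidableEq O]
    {A : Matrix (O × I) (O × I) ℂ} (hA : A.PosSemidef) : (ptr1 A).PosSemidef := by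
  refine Matrix.PosSemidef.of_dotProduct_mulVec_nonneg ?_ ?_
  · ext i j
    simp only [Matrix.conjTranspose_apply, ptr1, star_sum]
    refine Finset.sum_congr rfl fun p _ => ?_
    have := congrFun (congrFun hA.1 (p, i)) (p, j)
    simpa [Matrix.conjTranspose_apply] using this
  · intro x
    have L : star x ⬝ᵥ (ptr1 A) *ᵥ x
        = ∑ p : O, ∑ i : I, ∑ j : I, star (x i) * A (p, i) (p, j) * x j := by
      simp only [dotProduct, Matrix.mulVec, ptr1, Pi.star_apply,
        Finset.sum_mul, Finset.mul_sum]
      have h1 : ∀ i : I, ∑ j : I, ∑ p : O, star (x i) * (A (p, i) (p, j) * x j)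
          = ∑ p : O, ∑ j : I, star (x i) * (A (p, i) (p, j) * x j) :=
        fun i => Finset.sum_comm
      simp_rw [h1]
      rw [Finset.sum_comm]
      exact Finset.sum_congr rfl fun p _ => Finset.sum_congr rfl fun i _ =>
        Finset.sum_congr rfl fun j _ => by ring
    have R : ∀ p : O, star (fun qi : O × I => if qi.1 = p then x qi.2 else 0)
          ⬝ᵥ A *ᵥ (fun qi : O × I => if qi.1 = p then x qi.2 else 0)
        = ∑ i : I, ∑ j : I, star (x i) * A (p, i) (p, j) * x j := by
      intro p
      simp only [dotProduct, Matrix.mulVec, Pi.star_apply, Fintype.sum_prod_type,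
        apply_ite (star : ℂ → ℂ), star_zero, ite_mul, zero_mul, mul_ite, mul_zero,
        Finset.sum_ite_irrel, Finset.sum_const_zero, Fintype.sum_ite_eq',
        Finset.mul_sum]
      exact Finset.sum_congr rfl fun i _ => Finset.sum_congr rfl fun j _ => by ring
    rw [L]
    refine Finset.sum_nonneg fun p _ => ?_
    rw [← R p]
    exact hA.dotProduct_mulVec_nonneg _

lemma rank_le_of_psd_le {ι : Type} [Fintype ι] [DecidableEq ι]
    {A B : Matrix ι ι ℂ} (hA : A.PosSemidef) (hBA : (B - A).PosSemidef) :
    A.rank ≤ B.rank := by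
  have hker : LinearMap.ker B.mulVecLin ≤ LinearMap.ker A.mulVecLin := by
    intro x hx
    simp only [LinearMap.mem_ker, Matrix.mulVecLin_apply] at hx ⊢
    have h2 : star x ⬝ᵥ (B - A) *ᵥ x = -(star x ⬝ᵥ A *ᵥ x) := by
      rw [Matrix.sub_mulVec, hx, zero_sub, dotProduct_neg]
    have h0 : star x ⬝ᵥ A *ᵥ x = 0 :=
      le_antisymm (by simpa [h2, neg_nonneg] using hBA.dotProduct_mulVec_nonneg x) (hA.dotProduct_mulVec_nonneg x)
    exact (hA.dotProduct_mulVec_zero_iff x).mp h0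
  have hfk : Module.finrank ℂ (LinearMap.ker B.mulVecLin)
      ≤ Module.finrank ℂ (LinearMap.ker A.mulVecLin) :=
    Submodule.finrank_mono hker
  have hA' := LinearMap.finrank_range_add_finrank_ker A.mulVecLin
  have hB' := LinearMap.finrank_range_add_finrank_ker B.mulVecLin
  rw [Matrix.rank, Matrix.rank]
  omega

open scoped MatrixOrder in
lemma psd_decomp {ι : Type} [Fintype ι] [DecidableEq ι]
    {Q : Matrix ι ι ℂ} (hQ : Q.PosSemidef) :
    ∃ ψ : ι → ι → ℂ, Q = ∑ k, Matrix.vecMulVec (ψ k) (star (ψ k)) := by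
  refine ⟨fun k i => star (CFC.sqrt Q k i), ?_⟩
  ext i j
  have herm : (CFC.sqrt Q).conjTranspose = CFC.sqrt Q :=
    (Matrix.nonneg_iff_posSemidef.mp (CFC.sqrt_nonneg Q)).1
  calc Q i j = ((CFC.sqrt Q)ᴴ * CFC.sqrt Q) i j := by
        rw [herm, CFC.sqrt_mul_sqrt_self Q (Matrix.nonneg_iff_posSemidef.mpr hQ)]
    _ = ∑ k, star (CFC.sqrt Q k i) * CFC.sqrt Q k j := by
        simp [Matrix.mul_apply, Matrix.conjTranspose_apply]
    _ = (∑ k, Matrix.vecMulVec (fun i => star (CFC.sqrt Q k i))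
          (star fun i => star (CFC.sqrt Q k i))) i j := by
        simp [Matrix.sum_apply, Matrix.vecMulVec_apply]

lemma ptr1_sub {O I : Type} [Fintype O] [Fintype I]
    (A B : Matrix (O × I) (O × I) ℂ) : ptr1 (A - B) = ptr1 A - ptr1 B := by
  ext i j
  simp [ptr1, Finset.sum_sub_distrib]

/-- if a positive semidefinite operator `C` on `ℂ^m ⊗ ℂ^n`
decomposes as a finite sum of positive semidefinite operators `Q i` whose
reductions `Tr_{ℂ^m}[Q i]` have rank at most `d`, then `C` decomposes as a
finite sum of rank-one operators `|ψ j⟩⟨ψ j|` with every `ψ j` of Schmidt rank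
at most `d` (i.e. `rank (Tr_{ℂ^m}[|ψ j⟩⟨ψ j|]) ≤ d`). -/
theorem stmt10 (m n d : ℕ)
    (C : Matrix (Fin m × Fin n) (Fin m × Fin n) ℂ) (hC : C.PosSemidef)
    (s : ℕ) (Q : Fin s → Matrix (Fin m × Fin n) (Fin m × Fin n) ℂ)
    (hQ : ∀ i, (Q i).PosSemidef)
    (hsum : ∑ i, Q i = C)
    (hrank : ∀ i, (ptr1 (Q i)).rank ≤ d) :
    ∃ (t : ℕ) (ψ : Fin t → (Fin m × Fin n → ℂ)),
      C = ∑ j, Matrix.vecMulVec (ψ j) (star (ψ j)) ∧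
      ∀ j, (ptr1 (Matrix.vecMulVec (ψ j) (star (ψ j)))).rank ≤ d := by
  classical
  choose ψ hψ using fun i => psd_decomp (hQ i)
  let J := Fin s × (Fin m × Fin n)
  let e := (Fintype.equivFin J).symm
  refine ⟨Fintype.card J, fun j => ψ (e j).1 (e j).2, ?_, ?_⟩
  · rw [← hsum]
    rw [Equiv.sum_comp e (fun p : J => Matrix.vecMulVec (ψ p.1 p.2) (star (ψ p.1 p.2)))]
    rw [Fintype.sum_prod_type]
    exact Finset.sum_congr rfl fun i _ => by simpa using hψ i
  · intro j
    set p := e j with hp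
    have h1 : (Matrix.vecMulVec (ψ p.1 p.2) (star (ψ p.1 p.2))).PosSemidef :=
      vecMulVec_star_posSemidef _
    have hsub : (Q p.1 - Matrix.vecMulVec (ψ p.1 p.2) (star (ψ p.1 p.2))).PosSemidef := by
      have : Q p.1 - Matrix.vecMulVec (ψ p.1 p.2) (star (ψ p.1 p.2))
          = ∑ k ∈ Finset.univ.erase p.2,
              Matrix.vecMulVec (ψ p.1 k) (star (ψ p.1 k)) := by
        rw [hψ p.1, ← Finset.sum_erase_add _ _ (Finset.mem_univ p.2)]
        abel
      rw [this]
      exact psd_sum _ _ fun k _ => vecMulVec_star_posSemidef _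
    have hBA : (ptr1 (Q p.1)
        - ptr1 (Matrix.vecMulVec (ψ p.1 p.2) (star (ψ p.1 p.2)))).PosSemidef := by
      rw [← ptr1_sub]
      exact ptr1_posSemidef hsub
    exact le_trans (rank_le_of_psd_le (ptr1_posSemidef h1) hBA) (hrank p.1)

end
end
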